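/- Let ∂ : M → P be a pre-crossed module and φ : P → Q a surjective homomorphism with kernel K. Let [K,M] ≤ M be the normal subgroup generated by {m⁻¹ m^k : k ∈ K, m ∈ M}. Then the map ∂* : M/[K,M] → Q given by ∂*(m[K,M]) = φ(∂ m) is a well-defined group homomorphism, and with the induced Q-action (m[K,M])^{φ(p)} = m^p[K,M] it is a pre-crossed module; moreover if ∂ is a nil(2)-module then so is ∂*. -/
import Mathlib


/-- Peiffer commutator of a pre-crossed module given by boundary `D` and action `A`. -/
def peiffer {G Q : Type*} [Group G] [Group Q] (D : G →* Q) (A : Q →* MulAut G)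
    (x y : G) : G :=
  x⁻¹ * y⁻¹ * x * A (D x) y

section Aux
variable {M P Q : Type*} [Group M] [Group P] [Group Q]
    (d : M →* P) (a : P →* MulAut M)
    (φ : P →* Q)

def NN : Subgroup M := Subgroup.normalClosure {x | ∃ k ∈ φ.ker, ∃ m : M, x = m⁻¹ * a k m}

instance : (NN a φ).Normal := Subgroup.normalClosure_normal

lemma mem_NN_gen {k : P} (hk : k ∈ φ.ker) (m : M) : m⁻¹ * a k m ∈ NN a φ :=
  Subgroup.subset_normalClosure ⟨k, hk, m, rfl⟩

lemma NN_le_ker (hpre : ∀ (m : M) (p : P), d (a p m) = p⁻¹ * d m * p) :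
    NN a φ ≤ (φ.comp d).ker := by
  apply Subgroup.normalClosure_le_normal
  rintro x ⟨k, hk, m, rfl⟩
  have hk1 : φ k = 1 := hk
  simp [MonoidHom.mem_ker, hpre, hk1]

/-- induced endo of the quotient -/
noncomputable def Fq (p : P) : M ⧸ NN a φ →* M ⧸ NN a φ :=
  QuotientGroup.lift (NN a φ) ((QuotientGroup.mk' (NN a φ)).comp (a p).toMonoidHom) (by
    apply Subgroup.normalClosure_le_normal
    rintro x ⟨k, hk, m, rfl⟩
    have hk' : p * k * p⁻¹ ∈ φ.ker := by
      have : φ k = 1 := hk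
      simp [MonoidHom.mem_ker, this]
    have key : a p (m⁻¹ * a k m) = (a p m)⁻¹ * a (p * k * p⁻¹) (a p m) := by
      have h1 : a (p * k * p⁻¹) (a p m) = a (p * k) m := by
        rw [← MulAut.mul_apply, ← map_mul]; group
      rw [h1, map_mul, map_inv, map_mul, MulAut.mul_apply]
    simp only [SetLike.mem_coe, MonoidHom.mem_ker, MonoidHom.comp_apply,
      MulEquiv.coe_toMonoidHom, QuotientGroup.mk'_apply, key]
    rw [QuotientGroup.eq_one_iff]
    exact mem_NN_gen a φ hk' (a p m))

@[simp] lemma Fq_mk (p : P) (m : M) :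
    Fq a φ p (QuotientGroup.mk m) = QuotientGroup.mk (a p m) := rfl

lemma Fq_comp (p q : P) : (Fq a φ p).comp (Fq a φ q) = Fq a φ (p * q) :=
  MonoidHom.ext fun x => QuotientGroup.induction_on x fun m => by
    show (QuotientGroup.mk (a p (a q m)) : M ⧸ NN a φ) = QuotientGroup.mk (a (p * q) m)
    rw [map_mul a p q, MulAut.mul_apply]

lemma Fq_one : Fq a φ 1 = MonoidHom.id (M ⧸ NN a φ) :=
  MonoidHom.ext fun x => QuotientGroup.induction_on x fun m => by
    show (QuotientGroup.mk (a 1 m) : M ⧸ NN a φ) = QuotientGroup.mk m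
    rw [map_one]
    rfl

/-- induced automorphism -/
noncomputable def Bq : P →* MulAut (M ⧸ NN a φ) where
  toFun p := MonoidHom.toMulEquiv (Fq a φ p) (Fq a φ p⁻¹)
    (by rw [Fq_comp]; simp [Fq_one]) (by rw [Fq_comp]; simp [Fq_one])
  map_one' := MulEquiv.ext fun x => QuotientGroup.induction_on x fun m => by
    show (QuotientGroup.mk (a 1 m) : M ⧸ NN a φ) = QuotientGroup.mk m
    rw [map_one]; rfl
  map_mul' p q := MulEquiv.ext fun x => QuotientGroup.induction_on x fun m => by
    show (QuotientGroup.mk (a (p * q) m) : M ⧸ NN a φ) = QuotientGroup.mk (a p (a q m))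
    rw [map_mul a p q, MulAut.mul_apply]

@[simp] lemma Bq_mk (p : P) (m : M) :
    Bq a φ p (QuotientGroup.mk m) = QuotientGroup.mk (a p m) := rfl

lemma ker_le_Bq_ker : φ.ker ≤ (Bq a φ).ker := by
  intro k hk
  rw [MonoidHom.mem_ker]
  refine MulEquiv.ext fun x => QuotientGroup.induction_on x fun m => ?_
  show QuotientGroup.mk (a k m) = QuotientGroup.mk m
  rw [QuotientGroup.eq]
  have := mem_NN_gen a φ hk m
  -- need (a k m)⁻¹ * m ∈ NN ; we have m⁻¹ * a k m ∈ NN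
  simpa using (NN a φ).inv_mem this

end Aux

/-- for a pre-crossed module d : M → P and a surjection φ : P → Q with kernel K,
the map ∂* : M/[K,M] → Q, m[K,M] ↦ φ(d m), is a well-defined homomorphism, the Q-action
(m[K,M])^{φ p} = m^p[K,M] is well defined, ∂* is a pre-crossed module for it, and if d is a
nil(2)-module then so is ∂*. -/
theorem induced_along_surjection_precrossed {M P Q : Type*}
    [Group M] [Group P] [Group Q]
    (d : M →* P) (a : P →* MulAut M)
    (hpre : ∀ (m : M) (p : P), d (a p m) = p⁻¹ * d m * p)
    (φ : P →* Q) (hφ : Function.Surjective φ) :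
    let N : Subgroup M :=
      Subgroup.normalClosure {x | ∃ k ∈ φ.ker, ∃ m : M, x = m⁻¹ * a k m}
    ∃ (D : M ⧸ N →* Q) (A : Q →* MulAut (M ⧸ N)),
      (∀ m : M, D (QuotientGroup.mk m) = φ (d m)) ∧
      (∀ (p : P) (m : M), A (φ p) (QuotientGroup.mk m) = QuotientGroup.mk (a p m)) ∧
      (∀ (q : Q) (x : M ⧸ N), D (A q x) = q⁻¹ * D x * q) ∧
      ((∀ x y z : M,
          peiffer d a (peiffer d a x y) z = 1 ∧ peiffer d a x (peiffer d a y z) = 1) →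
        ∀ x y z : M ⧸ N,
          peiffer D A (peiffer D A x y) z = 1 ∧ peiffer D A x (peiffer D A y z) = 1) := by
  intro N
  have hNeq : N = NN a φ := rfl
  let D : M ⧸ N →* Q := QuotientGroup.lift N (φ.comp d) (NN_le_ker d a φ hpre)
  let e : P ⧸ φ.ker ≃* Q := QuotientGroup.quotientKerEquivOfSurjective φ hφ
  let A : Q →* MulAut (M ⧸ N) :=
    (QuotientGroup.lift φ.ker (Bq a φ) (ker_le_Bq_ker a φ)).comp e.symm.toMonoidHom
  have hD : ∀ m : M, D (QuotientGroup.mk m) = φ (d m) := fun m => rfl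
  have hesymm : ∀ p : P, e.symm (φ p) = QuotientGroup.mk p := fun p => by
    rw [MulEquiv.symm_apply_eq]; rfl
  have hA : ∀ (p : P) (m : M),
      A (φ p) (QuotientGroup.mk m) = QuotientGroup.mk (a p m) := fun p m => by
    show (QuotientGroup.lift φ.ker (Bq a φ) (ker_le_Bq_ker a φ)) (e.symm (φ p)) _ = _
    rw [hesymm]
    rfl
  refine ⟨D, A, hD, hA, ?_, ?_⟩
  · intro q x
    obtain ⟨p, rfl⟩ := hφ q
    refine QuotientGroup.induction_on x fun m => ?_
    rw [hA, hD, hD, hpre]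
    simp
  · intro h x y z
    have hpeif : ∀ s t : M, peiffer D A (QuotientGroup.mk s) (QuotientGroup.mk t) =
        QuotientGroup.mk (peiffer d a s t) := by
      intro s t
      unfold peiffer
      rw [hD, hA]
      rfl
    refine QuotientGroup.induction_on x fun x => ?_
    refine QuotientGroup.induction_on y fun y => ?_
    refine QuotientGroup.induction_on z fun z => ?_
    constructor
    · rw [hpeif, hpeif, (h x y z).1]
      rfl
    · rw [hpeif, hpeif, (h x y z).2]
      rfl
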